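/- In the exchange graph G† of cycle representations, where an arc connects representation C(x, e_uv) to an equivalent representation according to the switching rules of Lemma on isometric circuits, every arc is mutual: if there is an arc from representation R to representation R', then there is an arc from R' to R. -/

import Mathlib

open Finset
open scoped Classical

variable {V : Type*}

/-- Weight of a walk. -/
noncomputable def walkWeight (w : Sym2 V → ℝ) {G : SimpleGraph V} {u v : V}
    (p : G.Walk u v) : ℝ :=
  (p.edges.map w).sum

variable (G : SimpleGraph V) (P : ∀ u v : V, G.Walk u v)

/-- `sfun G P x u` is the first vertex (after `x`) on the chosen shortest path from
`x` to `u`. -/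
def sfun (x u : V) : V := (P x u).getVert 1

/-- The cycle `C(x, e_uv) = P_xu + P_xv + e_uv` represented by the vertex-edge pair. -/
noncomputable def repCycle (x u v : V) : Finset (Sym2 V) :=
  (P x u).edges.toFinset ∪ (P x v).edges.toFinset ∪ {s(u, v)}

/-- A valid representation `(x, e_uv)`: `e_uv` is an edge not lying on `P_xu` nor on
`P_xv`, and the two shortest paths leave `x` through different vertices (no bridge
degeneracies). -/
def ValidRep (x u v : V) : Prop :=
  G.Adj u v ∧ s(u, v) ∉ (P x u).edges ∧ s(u, v) ∉ (P x v).edges ∧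
    (x ≠ u → x ≠ v → sfun G P x u ≠ sfun G P x v)

/-- The switching rules between equivalent representations (arcs of the exchange
graph `G†`), on ordered triples `(x, u, v)`. -/
inductive Arc0 : V × V × V → V × V × V → Prop
  | rule1 (u v : V) (h : ValidRep G P u u v) :
      Arc0 (u, u, v) (v, u, v)
  | rule2a (x u v : V) (hxu : x ≠ u) (h : ValidRep G P x u v)
      (h2 : x = sfun G P (sfun G P x u) v) :
      Arc0 (x, u, v) (sfun G P x u, u, v)
  | rule2b (x u v : V) (hxu : x ≠ u) (h : ValidRep G P x u v)
      (h2 : x ≠ sfun G P (sfun G P x u) v) (h3 : u = sfun G P v (sfun G P x u)) :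
      Arc0 (x, u, v) (v, x, sfun G P x u)

/-- Arcs of the exchange graph `G†` between representations, where a representation
is a vertex together with an (unordered) edge, and either endpoint of the edge may
play the role of `u`. -/
def Arc (r r' : V × Sym2 V) : Prop :=
  ∃ u v s t : V, r.2 = s(u, v) ∧ r'.2 = s(s, t) ∧ Arc0 G P (r.1, u, v) (r'.1, s, t)

namespace ExchangeAux

open SimpleGraph Walk

variable {G} {P}

/-! ### Generic walk lemmas -/

lemma path_self_eq_nil {v : V} (p : G.Walk v v) (hp : p.IsPath) : p = SimpleGraph.Walk.nil :=
  SimpleGraph.Walk.isPath_iff_eq_nil.mp hp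

lemma getVert_one_mem_support {a b : V} (p : G.Walk a b) : p.getVert 1 ∈ p.support := by
  cases p with
  | nil => simp [SimpleGraph.Walk.getVert]
  | cons h q =>
    rw [SimpleGraph.Walk.getVert_cons_succ, SimpleGraph.Walk.getVert_zero,
      SimpleGraph.Walk.support_cons]
    exact List.mem_cons_of_mem _ q.start_mem_support

lemma getVert_one_ne {a b : V} (p : G.Walk a b) (hp : p.IsPath) (hab : a ≠ b) :
    p.getVert 1 ≠ a := by
  cases p with
  | nil => exact absurd rfl hab
  | cons h q =>
    rw [SimpleGraph.Walk.getVert_cons_succ, SimpleGraph.Walk.getVert_zero]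
    rintro rfl
    exact ((SimpleGraph.Walk.cons_isPath_iff h q).mp hp).2 q.start_mem_support

lemma edge_one_mem {a b : V} (p : G.Walk a b) (hab : a ≠ b) :
    s(a, p.getVert 1) ∈ p.edges := by
  cases p with
  | nil => exact absurd rfl hab
  | cons h q =>
    rw [SimpleGraph.Walk.getVert_cons_succ, SimpleGraph.Walk.getVert_zero,
      SimpleGraph.Walk.edges_cons]
    exact List.mem_cons_self

lemma edge_start_unique {a b : V} (p : G.Walk a b) (hp : p.IsPath) {e : Sym2 V}
    (he : e ∈ p.edges) (ha : a ∈ e) : e = s(a, p.getVert 1) := by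
  cases p with
  | nil => simp at he
  | cons h q =>
    rw [SimpleGraph.Walk.getVert_cons_succ, SimpleGraph.Walk.getVert_zero]
    rw [SimpleGraph.Walk.edges_cons] at he
    rcases List.mem_cons.mp he with rfl | he'
    · rfl
    · exfalso
      have hmem : a ∈ q.support := by
        induction e using Sym2.ind with
        | _ x y =>
          rcases Sym2.mem_iff.mp ha with rfl | rfl
          · exact q.fst_mem_support_of_mem_edges he'
          · exact q.snd_mem_support_of_mem_edges he'
      exact ((SimpleGraph.Walk.cons_isPath_iff h q).mp hp).2 hmem

lemma edge_end_unique {a b : V} (p : G.Walk a b) (hp : p.IsPath) {e : Sym2 V}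
    (he : e ∈ p.edges) (hb : b ∈ e) : e = s(b, p.reverse.getVert 1) :=
  edge_start_unique p.reverse hp.reverse
    (by rw [SimpleGraph.Walk.edges_reverse]; exact List.mem_reverse.mpr he) hb

lemma edges_single {a b : V} (p : G.Walk a b) (hp : p.IsPath) (hab : a ≠ b)
    (h1 : p.getVert 1 = b) : p.edges = [s(a, b)] := by
  cases p with
  | nil => exact absurd rfl hab
  | cons h q =>
    rw [SimpleGraph.Walk.getVert_cons_succ, SimpleGraph.Walk.getVert_zero] at h1
    subst h1
    have hq : q = SimpleGraph.Walk.nil :=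
      path_self_eq_nil q ((SimpleGraph.Walk.cons_isPath_iff h q).mp hp).1
    subst hq
    simp

/-! ### Weight lemmas -/

variable (w : Sym2 V → ℝ)

lemma walkWeight_append {a b c : V} (p : G.Walk a b) (q : G.Walk b c) :
    walkWeight w (p.append q) = walkWeight w p + walkWeight w q := by
  simp [walkWeight, SimpleGraph.Walk.edges_append]

lemma walkWeight_pos (hw : ∀ e ∈ G.edgeSet, 0 < w e) {a b : V} (hab : a ≠ b)
    (p : G.Walk a b) : 0 < walkWeight w p := by
  cases p with
  | nil => exact absurd rfl hab
  | cons h q =>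
    apply List.sum_pos
    · intro x hx
      obtain ⟨e, he, rfl⟩ := List.mem_map.mp hx
      exact hw e ((SimpleGraph.Walk.cons h q).edges_subset_edgeSet he)
    · simp [SimpleGraph.Walk.edges_cons]

lemma weight_symm (hpath : ∀ u v : V, (P u v).IsPath)
    (hsymm : ∀ u v : V, (P u v).edges.toFinset = (P v u).edges.toFinset) (u v : V) :
    walkWeight w (P u v) = walkWeight w (P v u) := by
  have h1 : List.Perm (P u v).edges (P v u).edges := by
    have := List.toFinset_eq_iff_perm_dedup.mp (hsymm u v)
    rwa [(hpath u v).edges_nodup.dedup, (hpath v u).edges_nodup.dedup] at this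
  exact ((h1.map w).sum_eq :)

lemma weight_split (hshort : ∀ (u v : V) (q : G.Walk u v),
      walkWeight w (P u v) ≤ walkWeight w q) {x z : V} (y : V) (hy : y ∈ (P x z).support) :
    walkWeight w (P x y) + walkWeight w (P y z) = walkWeight w (P x z) := by
  have h1 : walkWeight w ((P x z).takeUntil y hy) + walkWeight w ((P x z).dropUntil y hy)
      = walkWeight w (P x z) := by
    rw [← walkWeight_append, (P x z).take_spec hy]
  have h2 := hshort x y ((P x z).takeUntil y hy)
  have h3 := hshort y z ((P x z).dropUntil y hy)
  have h4 := hshort x z ((P x y).append (P y z))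
  rw [walkWeight_append] at h4
  linarith

section Main

variable {w : Sym2 V → ℝ}

lemma d_pos (hw : ∀ e ∈ G.edgeSet, 0 < w e) {x y : V} (hxy : x ≠ y) :
    0 < walkWeight w (P x y) :=
  walkWeight_pos w hw hxy (P x y)

lemma mem_edges_symm (hsymm : ∀ u v : V, (P u v).edges.toFinset = (P v u).edges.toFinset)
    {x y : V} {e : Sym2 V} (he : e ∈ (P x y).edges) : e ∈ (P y x).edges :=
  List.mem_toFinset.mp ((hsymm x y) ▸ (List.mem_toFinset.mpr he))

/-- Reverse validity for rule 1. -/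
lemma rev1 (hpath : ∀ u v : V, (P u v).IsPath)
    (hsymm : ∀ u v : V, (P u v).edges.toFinset = (P v u).edges.toFinset)
    (u v : V) (h : ValidRep G P u u v) : ValidRep G P v v u := by
  obtain ⟨hadj, _, he2, _⟩ := h
  refine ⟨hadj.symm, ?_, ?_, fun hvv _ => absurd rfl hvv⟩
  · rw [path_self_eq_nil (P v v) (hpath v v)]
    simp
  · rw [Sym2.eq_swap]
    intro hmem
    exact he2 (mem_edges_symm hsymm hmem)

/-- Reverse validity for rule 2a. -/
lemma rev2a (hw : ∀ e ∈ G.edgeSet, 0 < w e)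
    (hpath : ∀ u v : V, (P u v).IsPath)
    (hshort : ∀ (u v : V) (q : G.Walk u v), walkWeight w (P u v) ≤ walkWeight w q)
    (hsymm : ∀ u v : V, (P u v).edges.toFinset = (P v u).edges.toFinset)
    (hcons : ∀ u v x y : V, x ∈ (P u v).support → y ∈ (P u v).support →
      (P x y).edges.toFinset ⊆ (P u v).edges.toFinset)
    (x u v : V) (hxu : x ≠ u) (h : ValidRep G P x u v)
    (h2 : x = sfun G P (sfun G P x u) v) :
    sfun G P x u ≠ v ∧ ValidRep G P (sfun G P x u) v u := by
  obtain ⟨hadj, he1, he2, hne⟩ := h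
  have huv : u ≠ v := hadj.ne
  have hx'x : sfun G P x u ≠ x := getVert_one_ne _ (hpath x u) hxu
  have hx'supp : sfun G P x u ∈ (P x u).support := getVert_one_mem_support _
  have hx'v : sfun G P x u ≠ v := by
    intro hxv
    have hPvv : (P v v) = SimpleGraph.Walk.nil := path_self_eq_nil _ (hpath v v)
    have hxv2 : x = v := by
      rw [hxv] at h2
      rw [h2]
      show (P v v).getVert 1 = v
      rw [hPvv]
      rfl
    exact hx'x (hxv.trans hxv2.symm)
  refine ⟨hx'v, hadj.symm, ?_, ?_, ?_⟩
  · -- s(v,u) ∉ (P (sfun x u) v).edges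
    rw [Sym2.eq_swap]
    intro hmem
    by_cases hxv : x = v
    · have hsingle : (P (sfun G P x u) v).edges = [s(sfun G P x u, v)] := by
        refine edges_single _ (hpath _ v) hx'v ?_
        show sfun G P (sfun G P x u) v = v
        rw [← h2, hxv]
      rw [hsingle] at hmem
      have heq : s(u, v) = s(sfun G P x u, v) := List.mem_singleton.mp hmem
      have hux' : u = sfun G P x u := by
        rcases Sym2.eq_iff.mp heq with ⟨h1, _⟩ | ⟨h1, _⟩
        · exact h1
        · exact absurd h1 huv
      have hPxu : (P x u).edges = [s(x, u)] := by
        refine edges_single _ (hpath x u) hxu hux'.symm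
      apply he1
      rw [hPxu]
      exact List.mem_singleton.mpr (by rw [hxv]; exact Sym2.eq_swap)
    · have hxsupp : x ∈ (P (sfun G P x u) v).support := by
        have h5 : sfun G P (sfun G P x u) v ∈ (P (sfun G P x u) v).support :=
          getVert_one_mem_support _
        rwa [← h2] at h5
      have hlast : s(v, (P x v).reverse.getVert 1) ∈ (P x v).edges := by
        have := edge_one_mem (P x v).reverse (Ne.symm hxv)
        rw [SimpleGraph.Walk.edges_reverse] at this
        exact List.mem_reverse.mp this
      have hlast' : s(v, (P x v).reverse.getVert 1) ∈ (P (sfun G P x u) v).edges := by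
        have hsub := hcons (sfun G P x u) v x v hxsupp (P (sfun G P x u) v).end_mem_support
        exact List.mem_toFinset.mp (hsub (List.mem_toFinset.mpr hlast))
      have hu1 : s(u, v) = s(v, (P (sfun G P x u) v).reverse.getVert 1) :=
        edge_end_unique _ (hpath _ v) hmem (by simp)
      have hu2 : s(v, (P x v).reverse.getVert 1)
          = s(v, (P (sfun G P x u) v).reverse.getVert 1) :=
        edge_end_unique _ (hpath _ v) hlast' (by simp)
      apply he2
      rw [hu1, ← hu2]
      exact hlast
  · -- s(v,u) ∉ (P (sfun x u) u).edges
    rw [Sym2.eq_swap]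
    intro hmem
    have hsub := hcons x u (sfun G P x u) u hx'supp (P x u).end_mem_support
    exact he1 (List.mem_toFinset.mp (hsub (List.mem_toFinset.mpr hmem)))
  · -- leaving vertices differ
    intro _ hx'u heq
    have hxeq : sfun G P (sfun G P x u) u = x := by
      rw [← heq]; exact h2.symm
    have hxsupp : x ∈ (P (sfun G P x u) u).support := by
      have h5 : sfun G P (sfun G P x u) u ∈ (P (sfun G P x u) u).support :=
        getVert_one_mem_support _
      rwa [hxeq] at h5
    have hA : walkWeight w (P x (sfun G P x u)) + walkWeight w (P (sfun G P x u) u)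
        = walkWeight w (P x u) := weight_split w hshort _ hx'supp
    have hB : walkWeight w (P (sfun G P x u) x) + walkWeight w (P x u)
        = walkWeight w (P (sfun G P x u) u) := weight_split w hshort _ hxsupp
    have hC : walkWeight w (P (sfun G P x u) x) = walkWeight w (P x (sfun G P x u)) :=
      weight_symm w hpath hsymm _ _
    have hD : 0 < walkWeight w (P x (sfun G P x u)) := d_pos hw (Ne.symm hx'x)
    linarith

/-- Reverse validity for rule 2b. -/
lemma rev2b (hw : ∀ e ∈ G.edgeSet, 0 < w e)
    (hpath : ∀ u v : V, (P u v).IsPath)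
    (hshort : ∀ (u v : V) (q : G.Walk u v), walkWeight w (P u v) ≤ walkWeight w q)
    (hsymm : ∀ u v : V, (P u v).edges.toFinset = (P v u).edges.toFinset)
    (x u v : V) (hxu : x ≠ u) (h : ValidRep G P x u v)
    (h2 : x ≠ sfun G P (sfun G P x u) v) (h3 : u = sfun G P v (sfun G P x u)) :
    v ≠ sfun G P x u ∧ ValidRep G P v (sfun G P x u) x ∧ v ≠ sfun G P u x := by
  obtain ⟨hadj, he1, he2, hne⟩ := h
  have huv : u ≠ v := hadj.ne
  have hx'x : sfun G P x u ≠ x := getVert_one_ne _ (hpath x u) hxu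
  have hx'supp : sfun G P x u ∈ (P x u).support := getVert_one_mem_support _
  have hedge1 : s(x, sfun G P x u) ∈ (P x u).edges := edge_one_mem _ hxu
  have hadj' : G.Adj (sfun G P x u) x := ((P x u).adj_of_mem_edges hedge1).symm
  have hvx' : v ≠ sfun G P x u := by
    intro hveq
    apply huv
    rw [h3, ← hveq]
    show (P v v).getVert 1 = v
    rw [path_self_eq_nil (P v v) (hpath v v)]
    rfl
  have hvx : v ≠ x := by
    intro hveq
    subst hveq
    have husupp : u ∈ (P v (sfun G P v u)).support := by
      have h5 : sfun G P v (sfun G P v u) ∈ (P v (sfun G P v u)).support :=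
        getVert_one_mem_support _
      rwa [← h3] at h5
    have hA : walkWeight w (P v (sfun G P v u)) + walkWeight w (P (sfun G P v u) u)
        = walkWeight w (P v u) := weight_split w hshort _ hx'supp
    have hB : walkWeight w (P v u) + walkWeight w (P u (sfun G P v u))
        = walkWeight w (P v (sfun G P v u)) := weight_split w hshort _ husupp
    have hC : walkWeight w (P u (sfun G P v u)) = walkWeight w (P (sfun G P v u) u) :=
      weight_symm w hpath hsymm _ _
    have hx'u : sfun G P v u = u := by
      by_contra hne'
      have := d_pos (P := P) hw hne'
      linarith
    apply he1
    have hPxu : (P v u).edges = [s(v, u)] := by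
      exact edges_single _ (hpath v u) (Ne.symm huv) hx'u
    rw [hPxu]
    exact List.mem_singleton.mpr Sym2.eq_swap
  have hvsux : v ≠ sfun G P u x := by
    intro hveq
    apply he1
    have : s(u, v) ∈ (P u x).edges := by
      rw [hveq]
      exact edge_one_mem _ (Ne.symm hxu)
    exact mem_edges_symm hsymm this
  refine ⟨hvx', ⟨hadj', ?_, ?_, ?_⟩, hvsux⟩
  · -- s(x', x) ∉ (P v x').edges
    intro hmem
    apply h2
    have hmem' : s(sfun G P x u, x) ∈ (P (sfun G P x u) v).edges :=
      mem_edges_symm hsymm hmem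
    have := edge_start_unique _ (hpath _ v) hmem' (by simp)
    rcases Sym2.eq_iff.mp this with ⟨_, h1⟩ | ⟨h1, h1'⟩
    · exact h1
    · exact absurd h1' (Ne.symm hx'x)
  · -- s(x', x) ∉ (P v x).edges
    intro hmem
    have hmem' : s(sfun G P x u, x) ∈ (P x v).edges := mem_edges_symm hsymm hmem
    have := edge_start_unique _ (hpath x v) hmem' (by simp)
    have hx'eq : sfun G P x u = sfun G P x v := by
      rcases Sym2.eq_iff.mp this with ⟨h1, _⟩ | ⟨h1, _⟩
      · exact absurd h1 hx'x
      · exact h1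
    exact hne hxu (Ne.symm hvx) hx'eq
  · -- leaving vertices differ
    intro _ _ heq
    apply he2
    have : s(v, u) ∈ (P v x).edges := by
      rw [h3, heq]
      exact edge_one_mem _ hvx
    rw [Sym2.eq_swap] at this
    exact mem_edges_symm hsymm this

end Main

end ExchangeAux

/-- In the exchange graph `G†` of cycle representations built from a consistent
all-pairs shortest path system, every arc is mutual: if there is an arc from
representation `r` to representation `r'`, then there is an arc from `r'` to `r`. -/
theorem exchange_graph_arcs_mutual [Fintype V] (w : Sym2 V → ℝ)
    (hw : ∀ e ∈ G.edgeSet, 0 < w e)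
    (hpath : ∀ u v : V, (P u v).IsPath)
    (hshort : ∀ (u v : V) (q : G.Walk u v), walkWeight w (P u v) ≤ walkWeight w q)
    (hsymm : ∀ u v : V, (P u v).edges.toFinset = (P v u).edges.toFinset)
    (hcons : ∀ u v x y : V, x ∈ (P u v).support → y ∈ (P u v).support →
      (P x y).edges.toFinset ⊆ (P u v).edges.toFinset)
    (r r' : V × Sym2 V) (h : Arc G P r r') : Arc G P r' r := by
  obtain ⟨u, v, s, t, hr2, hr'2, harc⟩ := h
  obtain ⟨x, e⟩ := r
  obtain ⟨y, e'⟩ := r'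
  simp only at hr2 hr'2 harc ⊢
  cases harc with
  | rule1 u₀ v₀ hval =>
      exact ⟨v, u, v, u, hr'2.trans Sym2.eq_swap, hr2.trans Sym2.eq_swap,
        Arc0.rule1 v u (ExchangeAux.rev1 hpath hsymm u v hval)⟩
  | rule2a x₀ u₀ v₀ hxu hval h2 =>
      obtain ⟨hne, hval'⟩ :=
        ExchangeAux.rev2a hw hpath hshort hsymm hcons x u v hxu hval h2
      refine ⟨v, u, v, u, hr'2.trans Sym2.eq_swap, hr2.trans Sym2.eq_swap, ?_⟩
      have harc' := Arc0.rule2a (G := G) (P := P) (sfun G P x u) v u hne hval'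
        (by rw [← h2])
      rwa [← h2] at harc'
  | rule2b x₀ u₀ v₀ hxu hval h2 h3 =>
      obtain ⟨hne, hval', hne2⟩ :=
        ExchangeAux.rev2b hw hpath hshort hsymm s u v hxu hval h2 h3
      refine ⟨sfun G P s u, s, v, u, hr'2.trans Sym2.eq_swap,
        hr2.trans Sym2.eq_swap, ?_⟩
      have harc' := Arc0.rule2b (G := G) (P := P) v (sfun G P s u) s hne hval'
        (by rw [← h3]; exact hne2) (by rw [← h3])
      rwa [← h3] at harc'
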